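/- Let a < 0 < b, let β₁ > β₂ > 0, and let 0 < E ≤ (b/β₁)·ln(β₁/β₂). Let f : ℝ → [0,∞) be f(x) = E/b for 0 ≤ x < b and f(x) = 0 otherwise. Then ∫_ℝ f(x) dx = E and for every measurable g : ℝ → [0,∞) with ∫_ℝ g(x) dx = E one has (1/(b−a))·∫_a^b (1 − e^{−α_x g(x)}) dx ≤ (1/(b−a))·∫_a^b (1 − e^{−α_x f(x)}) dx, where α_x = β₁ for x ≥ 0 and α_x = β₂ for x < 0. -/

import Mathlib

open MeasureTheory

/-- (Example 4, small budget.) For the uniform target density on `(a,b)`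
(`a < 0 < b`) and the two-rate exponential detection function with rate `β₁` on `[0,∞)` and
`β₂` on `(-∞,0)` (`β₁ > β₂ > 0`), when `0 < E ≤ (b/β₁)·ln(β₁/β₂)` the allocation placing
constant effort density `E/b` on `[0,b)` and zero elsewhere is feasible and maximizes the
subjective detection probability among measurable nonnegative allocations of total cost `E`. -/
theorem uniform_two_rate_optimal_small_budget
    (a b β₁ β₂ E : ℝ) (ha : a < 0) (hb : 0 < b)
    (hβ₂ : 0 < β₂) (hβ : β₂ < β₁)
    (hE0 : 0 < E) (hE : E ≤ b / β₁ * Real.log (β₁ / β₂))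
    (f : ℝ → ℝ)
    (hf : ∀ x, f x = if 0 ≤ x ∧ x < b then E / b else 0) :
    (∫ x, f x) = E ∧
    ∀ g : ℝ → ℝ, Measurable g → (∀ x, 0 ≤ g x) → (∫ x, g x) = E →
      (1 / (b - a)) * ∫ x in a..b, (1 - Real.exp (-((if 0 ≤ x then β₁ else β₂) * g x))) ≤
        (1 / (b - a)) * ∫ x in a..b, (1 - Real.exp (-((if 0 ≤ x then β₁ else β₂) * f x))) := by
  have hβ₁ : 0 < β₁ := hβ₂.trans hβ
  have hab : a ≤ b := (ha.trans hb).le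
  set c : ℝ := E / b with hc
  have hc0 : 0 ≤ c := by positivity
  set lam : ℝ := β₁ * Real.exp (-(β₁ * c)) with hlam
  have hlam0 : 0 < lam := by positivity
  set α : ℝ → ℝ := fun x => if 0 ≤ x then β₁ else β₂ with hα
  have hα0 : ∀ x, 0 < α x := by
    intro x; simp only [hα]; split_ifs <;> assumption
  have hαmeas : Measurable α := by
    exact Measurable.ite (measurableSet_le measurable_const measurable_id)
      measurable_const measurable_const
  -- f as an indicator function
  have hmeasIco : MeasurableSet (Set.Ico (0:ℝ) b) := measurableSet_Ico
  have hfind : f = Set.indicator (Set.Ico 0 b) (fun _ => c) := by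
    funext x
    simp only [hf, Set.indicator, Set.mem_Ico, hc]
  have hf0 : ∀ x, 0 ≤ f x := by
    intro x; rw [hf]; split_ifs <;> [exact hc0; exact le_refl 0]
  have hfmeas : Measurable f := by
    rw [hfind]; exact measurable_const.indicator hmeasIco
  have hfint : Integrable f := by
    rw [hfind]
    refine (integrable_indicator_iff hmeasIco).2 ?_
    exact integrableOn_const (by simp [Real.volume_Ico])
  -- β₂ ≤ lam
  have hlam2 : β₂ ≤ lam := by
    have h1 : β₁ * c ≤ Real.log (β₁ / β₂) := by
      rw [hc, ← mul_div_assoc, div_le_iff₀ hb]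
      rw [div_mul_eq_mul_div, le_div_iff₀ hβ₁] at hE
      nlinarith
    have h2 : Real.exp (-Real.log (β₁ / β₂)) ≤ Real.exp (-(β₁ * c)) :=
      Real.exp_le_exp.2 (neg_le_neg h1)
    rw [Real.exp_neg, Real.exp_log (by positivity)] at h2
    have h3 : (β₁ / β₂)⁻¹ = β₂ / β₁ := by
      rw [inv_div]
    rw [h3] at h2
    rw [hlam]
    calc β₂ = β₁ * (β₂ / β₁) := by field_simp
      _ ≤ β₁ * Real.exp (-(β₁ * c)) := by
          exact mul_le_mul_of_nonneg_left h2 hβ₁.le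
  -- key pointwise inequality
  have key : ∀ x, x < b → ∀ y, 0 ≤ y →
      1 - Real.exp (-(α x * y)) ≤ 1 - Real.exp (-(α x * f x)) + lam * (y - f x) := by
    intro x hxb y hy
    by_cases h0 : 0 ≤ x
    · have hαx : α x = β₁ := by simp [hα, h0]
      have hfx : f x = c := by rw [hf, if_pos ⟨h0, hxb⟩]
      rw [hαx, hfx]
      have hid : Real.exp (-(β₁ * y)) = Real.exp (-(β₁ * c)) * Real.exp (-(β₁ * (y - c))) := by
        rw [← Real.exp_add]; ring_nf
      have h2 := Real.add_one_le_exp (-(β₁ * (y - c)))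
      have h3 := Real.exp_pos (-(β₁ * c))
      rw [hid, hlam]
      nlinarith
    · have hαx : α x = β₂ := by simp [hα, h0]
      have hfx : f x = 0 := by
        rw [hf, if_neg]; tauto
      rw [hαx, hfx]
      simp only [mul_zero, neg_zero, Real.exp_zero, sub_zero, sub_self, zero_add]
      have h2 := Real.add_one_le_exp (-(β₂ * y))
      nlinarith
  -- integral of f over ℝ
  have hintf : (∫ x, f x) = E := by
    rw [hfind, integral_indicator hmeasIco, setIntegral_const, measureReal_def, Real.volume_Ico,
      smul_eq_mul, sub_zero, ENNReal.toReal_ofReal hb.le, hc]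
    field_simp
  refine ⟨hintf, ?_⟩
  intro g hgmeas hg0 hgE
  have hgint : Integrable g := by
    by_contra h
    rw [integral_undef h] at hgE
    linarith
  set S : Set ℝ := Set.Ioc a b with hS
  have hSmeas : MeasurableSet S := measurableSet_Ioc
  have hSfin : volume S < ⊤ := by
    rw [hS, Real.volume_Ioc]; exact ENNReal.ofReal_lt_top
  -- integrability of the detection integrands on S
  have hbdd : ∀ h : ℝ → ℝ, Measurable h → (∀ x, 0 ≤ h x) →
      IntegrableOn (fun x => 1 - Real.exp (-(α x * h x))) S := by
    intro h hm hp
    refine Integrable.mono' (integrable_const 1)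
      ((measurable_const.sub ((hαmeas.mul hm).neg.exp)).aestronglyMeasurable) ?_
    refine ae_of_all _ fun x => ?_
    have h1 : 0 ≤ α x * h x := mul_nonneg (hα0 x).le (hp x)
    have h2 : Real.exp (-(α x * h x)) ≤ 1 := Real.exp_le_one_iff.2 (by linarith)
    have h3 := Real.exp_pos (-(α x * h x))
    rw [Real.norm_eq_abs, abs_of_nonneg (by linarith)]
    linarith
  have hIg : IntegrableOn (fun x => 1 - Real.exp (-(α x * g x))) S := hbdd g hgmeas hg0
  have hIf : IntegrableOn (fun x => 1 - Real.exp (-(α x * f x))) S := hbdd f hfmeas hf0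
  have hIrest : IntegrableOn (fun x => lam * (g x - f x)) S :=
    ((hgint.integrableOn.sub hfint.integrableOn).const_mul lam)
  -- a.e. pointwise inequality on S
  have hae : ∀ᵐ x ∂(volume.restrict S),
      1 - Real.exp (-(α x * g x)) ≤
        (1 - Real.exp (-(α x * f x)) + lam * (g x - f x)) := by
    have hne : ∀ᵐ x : ℝ, x ≠ b := by
      rw [ae_iff]
      simp only [not_not, Set.setOf_eq_eq_singleton]
      exact Real.volume_singleton
    filter_upwards [ae_restrict_mem hSmeas, ae_restrict_of_ae hne] with x hx hxb
    exact key x (lt_of_le_of_ne hx.2 hxb) (g x) (hg0 x)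
  have hmono : ∫ x in S, (1 - Real.exp (-(α x * g x))) ≤
      ∫ x in S, (1 - Real.exp (-(α x * f x)) + lam * (g x - f x)) :=
    integral_mono_ae hIg (hIf.add hIrest) hae
  -- compute the right-hand side
  have hfS : ∫ x in S, f x = E := by
    rw [hfind, setIntegral_indicator hmeasIco]
    have hsub : S ∩ Set.Ico 0 b = Set.Ico 0 b := by
      apply Set.inter_eq_self_of_subset_right
      intro x hx
      exact ⟨lt_of_lt_of_le ha hx.1, hx.2.le⟩
    rw [hsub, setIntegral_const, measureReal_def, Real.volume_Ico, smul_eq_mul, sub_zero,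
      ENNReal.toReal_ofReal hb.le, hc]
    field_simp
  have hgS : ∫ x in S, g x ≤ E := by
    rw [← hgE]
    exact setIntegral_le_integral hgint (ae_of_all _ hg0)
  have hsplit : ∫ x in S, (1 - Real.exp (-(α x * f x)) + lam * (g x - f x)) =
      (∫ x in S, (1 - Real.exp (-(α x * f x)))) + lam * ((∫ x in S, g x) - E) := by
    rw [integral_add hIf hIrest, integral_const_mul, integral_sub hgint.integrableOn
      hfint.integrableOn, hfS]
  have hcore : ∫ x in S, (1 - Real.exp (-(α x * g x))) ≤
      ∫ x in S, (1 - Real.exp (-(α x * f x))) := by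
    rw [hsplit] at hmono
    nlinarith
  rw [intervalIntegral.integral_of_le hab, intervalIntegral.integral_of_le hab]
  have hba : 0 ≤ 1 / (b - a) := div_nonneg zero_le_one (by linarith)
  exact mul_le_mul_of_nonneg_left hcore hba
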